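/- Let a, b ∈ [0,1] with a + b < 1 and let M be the 2×2 Markov matrix with rows (1−a, a) and (b, 1−b). If Q and Q' are 2×2 Markov generators with exp(Q) = exp(Q') = M, then Q = Q'. Moreover, when 0 < a + b < 1, this unique generator is Q = (−log(1 − a − b)/(a + b)) · (M − 1), and when a = b = 0 it is Q = 0. -/

import Mathlib

noncomputable def Gf (s : ℝ) : ℝ := ∑' n : ℕ, (-s)^n / (n+1).factorial

lemma Gsummable (s : ℝ) : Summable (fun n : ℕ => (-s)^n / (n+1).factorial) := by
  refine Summable.of_norm_bounded (g := fun n => |s|^n / n.factorial)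
    (Real.summable_pow_div_factorial |s|) (fun n => ?_)
  simp only [norm_div, norm_pow, norm_neg, Real.norm_eq_abs, Real.norm_natCast]
  gcongr
  exact_mod_cast Nat.factorial_le (Nat.le_succ n)

lemma real_exp_tsum (x : ℝ) : Real.exp x = ∑' n : ℕ, x^n / n.factorial := by
  rw [Real.exp_eq_exp_ℝ, NormedSpace.exp_eq_tsum_div]

lemma exp_summable (x : ℝ) : Summable (fun n : ℕ => x^n / n.factorial) := by
  refine Summable.of_norm_bounded (g := fun n => |x|^n / n.factorial)
    (Real.summable_pow_div_factorial |x|) (fun n => ?_)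
  simp [norm_div, norm_pow, Real.norm_eq_abs, Real.norm_natCast]

lemma G_key (s : ℝ) : s * Gf s = 1 - Real.exp (-s) := by
  have h := real_exp_tsum (-s)
  rw [Summable.tsum_eq_zero_add (exp_summable (-s))] at h
  simp only [pow_zero, Nat.factorial_zero, Nat.cast_one, div_one] at h
  have h2 : ∑' n : ℕ, (-s)^(n+1) / ((n+1).factorial : ℝ)
      = (-s) * ∑' n : ℕ, (-s)^n / (n+1).factorial := by
    rw [← tsum_mul_left]
    congr 1; ext n; rw [pow_succ']; ring
  rw [h2] at h
  unfold Gf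
  linarith [h]

lemma G_pos {s : ℝ} (hs : 0 ≤ s) : 0 < Gf s := by
  rcases eq_or_lt_of_le hs with h | h
  · have h1 : Gf 0 = 1 := by
      unfold Gf
      rw [tsum_eq_single 0]
      · norm_num
      · intro n hn
        simp [zero_pow hn]
    rw [← h, h1]; norm_num
  · have hk := G_key s
    have he : Real.exp (-s) < 1 := Real.exp_lt_one_iff.mpr (by linarith)
    have h3 : Gf s = (1 - Real.exp (-s)) / s := by field_simp [h.ne'] at hk ⊢; linarith
    rw [h3]; exact div_pos (by linarith) h

def Amat (p q : ℝ) : Matrix (Fin 2) (Fin 2) ℝ := !![-p, p; q, -q]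

lemma Amat_mul (p q : ℝ) : Amat p q * Amat p q = (-(p+q)) • Amat p q := by
  ext i j
  fin_cases i <;> fin_cases j <;>
    simp [Amat, Matrix.mul_apply, Fin.sum_univ_two] <;> ring

lemma Amat_pow (p q : ℝ) (n : ℕ) : (Amat p q)^(n+1) = (-(p+q))^n • Amat p q := by
  induction n with
  | zero => simp
  | succ n ih =>
    rw [pow_succ, ih, Matrix.smul_mul, Amat_mul, smul_smul, ← pow_succ]

lemma Amat_exp (p q : ℝ) :
    NormedSpace.exp (Amat p q) = 1 + Gf (p+q) • Amat p q := by
  set s := p + q with hs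
  have hsc : Summable (fun n : ℕ => (((n+1).factorial : ℝ))⁻¹ * (-s)^n) := by
    have h := Gsummable s
    simpa [div_eq_mul_inv, mul_comm] using h
  have hfun : (fun n : ℕ => (((n+1).factorial : ℝ))⁻¹ • (Amat p q)^(n+1))
      = fun n : ℕ => ((((n+1).factorial : ℝ))⁻¹ * (-s)^n) • Amat p q := by
    ext1 n; rw [Amat_pow, smul_smul]
  have hsum1 : Summable (fun n : ℕ => (((n+1).factorial : ℝ))⁻¹ • (Amat p q)^(n+1)) := by
    rw [hfun]; exact hsc.smul_const _
  have hsum : Summable (fun n : ℕ => ((n.factorial : ℝ))⁻¹ • (Amat p q)^n) :=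
    (summable_nat_add_iff 1).mp hsum1
  rw [NormedSpace.exp_eq_tsum ℝ]
  simp only []
  rw [Summable.tsum_eq_zero_add hsum]
  simp only [pow_zero, Nat.factorial_zero, Nat.cast_one, inv_one, one_smul]
  congr 1
  rw [hfun, Summable.tsum_smul_const hsc]
  congr 1
  unfold Gf
  exact (tsum_congr fun n => by rw [div_eq_mul_inv, mul_comm]).symm

/-- A Markov generator (rate matrix): nonnegative off-diagonal entries,
each row sums to 0. -/
def IsGenerator {d : ℕ} (Q : Matrix (Fin d) (Fin d) ℝ) : Prop :=
  (∀ i j, i ≠ j → 0 ≤ Q i j) ∧ ∀ i, ∑ j, Q i j = 0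

lemma gen_form (R : Matrix (Fin 2) (Fin 2) ℝ) (hR : IsGenerator R) :
    R = Amat (R 0 1) (R 1 0) := by
  have h0 := hR.2 0
  have h1 := hR.2 1
  rw [Fin.sum_univ_two] at h0 h1
  ext i j
  fin_cases i <;> fin_cases j <;> simp [Amat] <;> linarith

lemma entry_eq {a b p q g : ℝ} (h : !![1-a, a; b, 1-b] = 1 + g • Amat p q) :
    a = g * p ∧ b = g * q := by
  constructor
  · have h01 := congr_fun (congr_fun h 0) 1
    simpa [Amat, Matrix.one_apply] using h01
  · have h10 := congr_fun (congr_fun h 1) 0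
    simpa [Amat, Matrix.one_apply] using h10

theorem unique_generator_two_dim (a b : ℝ)
    (ha : a ∈ Set.Icc (0 : ℝ) 1) (hb : b ∈ Set.Icc (0 : ℝ) 1)
    (hab : a + b < 1)
    (M : Matrix (Fin 2) (Fin 2) ℝ) (hM : M = !![1 - a, a; b, 1 - b])
    (Q Q' : Matrix (Fin 2) (Fin 2) ℝ)
    (hQ : IsGenerator Q) (hQ' : IsGenerator Q')
    (he : NormedSpace.exp Q = M) (he' : NormedSpace.exp Q' = M) :
    Q = Q' ∧
    (0 < a + b → Q = (-(Real.log (1 - a - b)) / (a + b)) • (M - 1)) ∧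
    (a = 0 ∧ b = 0 → Q = 0) := by
  set p := Q 0 1 with hp_def
  set q := Q 1 0 with hq_def
  set p' := Q' 0 1 with hp'_def
  set q' := Q' 1 0 with hq'_def
  have hp : 0 ≤ p := hQ.1 0 1 (by decide)
  have hq : 0 ≤ q := hQ.1 1 0 (by decide)
  have hp' : 0 ≤ p' := hQ'.1 0 1 (by decide)
  have hq' : 0 ≤ q' := hQ'.1 1 0 (by decide)
  have hform : Q = Amat p q := gen_form Q hQ
  have hform' : Q' = Amat p' q' := gen_form Q' hQ'
  have hMe : !![1-a, a; b, 1-b] = 1 + Gf (p+q) • Amat p q := by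
    rw [← hM, ← he, hform, Amat_exp]
  have hMe' : !![1-a, a; b, 1-b] = 1 + Gf (p'+q') • Amat p' q' := by
    rw [← hM, ← he', hform', Amat_exp]
  obtain ⟨hA, hB⟩ := entry_eq hMe
  obtain ⟨hA', hB'⟩ := entry_eq hMe'
  have hs : 0 ≤ p + q := by linarith
  have hs' : 0 ≤ p' + q' := by linarith
  have hG : 0 < Gf (p+q) := G_pos hs
  have hG' : 0 < Gf (p'+q') := G_pos hs'
  have hexp1 : Real.exp (-(p+q)) = 1 - a - b := by
    have hk := G_key (p+q)
    have hab2 : a + b = (p+q) * Gf (p+q) := by rw [hA, hB]; ring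
    linarith
  have hexp2 : Real.exp (-(p'+q')) = 1 - a - b := by
    have hk := G_key (p'+q')
    have hab2 : a + b = (p'+q') * Gf (p'+q') := by rw [hA', hB']; ring
    linarith
  have hss : p + q = p' + q' := by
    have : (-(p+q)) = (-(p'+q')) := Real.exp_eq_exp.mp (by rw [hexp1, hexp2])
    linarith
  have hGG : Gf (p+q) = Gf (p'+q') := by rw [hss]
  have hpp : p = p' := by
    have : Gf (p+q) * p = Gf (p+q) * p' := by rw [← hA, hGG, ← hA']
    exact mul_left_cancel₀ hG.ne' this
  have hqq : q = q' := by
    have : Gf (p+q) * q = Gf (p+q) * q' := by rw [← hB, hGG, ← hB']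
    exact mul_left_cancel₀ hG.ne' this
  refine ⟨by rw [hform, hform', hpp, hqq], ?_, ?_⟩
  · intro hpos
    have habE : a + b = (p+q) * Gf (p+q) := by rw [hA, hB]; ring
    have hsne : p + q ≠ 0 := by
      intro h0
      rw [h0] at habE
      simp at habE
      linarith
    have hspos : 0 < p + q := lt_of_le_of_ne hs (Ne.symm hsne)
    have hlog : Real.log (1 - a - b) = -(p+q) := by
      rw [← hexp1, Real.log_exp]
    have hcoef : -(Real.log (1 - a - b)) / (a + b) = (Gf (p+q))⁻¹ := by
      rw [hlog, habE]
      field_simp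
    have hM1 : M - 1 = Gf (p+q) • Amat p q := by
      rw [hM, hMe]; abel
    rw [hcoef, hM1, hform, smul_smul, inv_mul_cancel₀ hG.ne', one_smul]
  · rintro ⟨ha0, hb0⟩
    have hp0 : p = 0 := by
      have : Gf (p+q) * p = 0 := by rw [← hA, ha0]
      rcases mul_eq_zero.mp this with h | h
      · exact absurd h hG.ne'
      · exact h
    have hq0 : q = 0 := by
      have : Gf (p+q) * q = 0 := by rw [← hB, hb0]
      rcases mul_eq_zero.mp this with h | h
      · exact absurd h hG.ne'
      · exact h
    rw [hform, hp0, hq0]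
    ext i j
    fin_cases i <;> fin_cases j <;> simp [Amat]
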